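/- Let X be a well-ordered set, D(X) the free dialgebra over a field k with the deg-lex order, and S ⊆ D(X) a set of monic polynomials. Assume that every composition of left multiplication x ⊣ f (f ∈ S not right normed, x ∈ X) and every composition of right multiplication f ⊢ x (f ∈ S not left normed, x ∈ X) is trivial modulo S. Then every s-diword [asb] with s ∈ S can be written as a linear combination Σᵢ αᵢ [aᵢsᵢbᵢ] where each sᵢ ∈ S and each [aᵢsᵢbᵢ] is a normal sᵢ-diword. -/

import Mathlib

universe u v

/-- A dialgebra over a field `k`: a `k`-vector space with two bilinear associative
products `lp` (written `⊢` in the paper) and `rp` (written `⊣`) satisfying the three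
dialgebra axioms. -/
class Dialgebra (k : Type*) (D : Type*) [Field k] [AddCommGroup D] [Module k D] where
  lp : D → D → D
  rp : D → D → D
  lp_add_left : ∀ a b c : D, lp (a + b) c = lp a c + lp b c
  lp_add_right : ∀ a b c : D, lp a (b + c) = lp a b + lp a c
  lp_smul_left : ∀ (r : k) (a b : D), lp (r • a) b = r • lp a b
  lp_smul_right : ∀ (r : k) (a b : D), lp a (r • b) = r • lp a b
  rp_add_left : ∀ a b c : D, rp (a + b) c = rp a c + rp b c
  rp_add_right : ∀ a b c : D, rp a (b + c) = rp a b + rp a c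
  rp_smul_left : ∀ (r : k) (a b : D), rp (r • a) b = r • rp a b
  rp_smul_right : ∀ (r : k) (a b : D), rp a (r • b) = r • rp a b
  lp_assoc : ∀ a b c : D, lp (lp a b) c = lp a (lp b c)
  rp_assoc : ∀ a b c : D, rp (rp a b) c = rp a (rp b c)
  di1 : ∀ a b c : D, rp a (lp b c) = rp (rp a b) c
  di2 : ∀ a b c : D, lp (rp a b) c = lp a (lp b c)
  di3 : ∀ a b c : D, lp a (rp b c) = rp (lp a b) c

/-- A Leibniz algebra over a field `k`: a `k`-vector space with a bilinear bracket
satisfying the Leibniz identity `[[a,b],c] = [[a,c],b] + [a,[b,c]]`. -/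
class LeibnizAlgebra (k : Type*) (L : Type*) [Field k] [AddCommGroup L] [Module k L] where
  br : L → L → L
  br_add_left : ∀ a b c : L, br (a + b) c = br a c + br b c
  br_add_right : ∀ a b c : L, br a (b + c) = br a b + br a c
  br_smul_left : ∀ (r : k) (a b : L), br (r • a) b = r • br a b
  br_smul_right : ∀ (r : k) (a b : L), br a (r • b) = r • br a b
  leibniz : ∀ a b c : L, br (br a b) c = br (br a c) b + br a (br b c)

/-- A normal diword over `X`: a nonempty word in `X` together with a marked letter
(its center), recorded as the letters to the left of the center, the center, and the
letters to the right of the center. -/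
structure NDiword (X : Type*) where
  left : List X
  center : X
  right : List X

namespace NDiword

variable {X : Type*}

/-- The underlying (associative) word of a normal diword. -/
def word (u : NDiword X) : List X := u.left ++ u.center :: u.right

/-- Concatenation with center at the center of the second factor: the product `⊢`
on normal diwords. -/
def lconc (u v : NDiword X) : NDiword X := ⟨u.word ++ v.left, v.center, v.right⟩

/-- Concatenation with center at the center of the first factor: the product `⊣`
on normal diwords. -/
def rconc (u v : NDiword X) : NDiword X := ⟨u.left, u.center, u.right ++ v.word⟩

/-- The deg-lex order on normal diwords: compare `wt([u]) = (n+m+1, m, x₋ₘ, …, xₙ)`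
lexicographically. -/
def dlt [LinearOrder X] (u v : NDiword X) : Prop :=
  u.word.length < v.word.length ∨
    (u.word.length = v.word.length ∧
      (u.left.length < v.left.length ∨
        (u.left.length = v.left.length ∧ List.Lex (· < ·) u.word v.word)))

end NDiword

/-- The free dialgebra on `X` over `k`: the free `k`-vector space on the set of
normal diwords over `X`. -/
abbrev FreeDialg (k : Type*) [Field k] (X : Type*) := NDiword X →₀ k

/-- The one-letter normal diword `ẋ`, as an element of the free dialgebra. -/
noncomputable def ofX (k : Type*) [Field k] {X : Type*} (x : X) : FreeDialg k X :=
  Finsupp.single ⟨[], x, []⟩ 1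

section FreeDialgebra

variable {k : Type*} [Field k] {X : Type*}

/-- The product `⊢` on the free dialgebra, extended bilinearly from normal diwords. -/
noncomputable def lmul (f g : FreeDialg k X) : FreeDialg k X :=
  f.sum fun u a => g.sum fun v b => Finsupp.single (u.lconc v) (a * b)

/-- The product `⊣` on the free dialgebra, extended bilinearly from normal diwords. -/
noncomputable def rmul (f g : FreeDialg k X) : FreeDialg k X :=
  f.sum fun u a => g.sum fun v b => Finsupp.single (u.rconc v) (a * b)

/-- `x₁ ⊢ (x₂ ⊢ (⋯ ⊢ t))` for a word `a = x₁x₂⋯` of letters. -/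
noncomputable def lfold (a : List X) (t : FreeDialg k X) : FreeDialg k X :=
  a.foldr (fun x s => lmul (ofX k x) s) t

/-- `((t ⊣ x₁) ⊣ x₂) ⊣ ⋯` for a word `b = x₁x₂⋯` of letters. -/
noncomputable def rfold (t : FreeDialg k X) (b : List X) : FreeDialg k X :=
  b.foldl (fun s x => rmul s (ofX k x)) t

/-- `f` is left normed: every normal diword in its support has its center at the
last letter. -/
def LeftNormed (f : FreeDialg k X) : Prop := ∀ u ∈ f.support, u.right = ([] : List X)

/-- `f` is right normed: every normal diword in its support has its center at the
first letter. -/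
def RightNormed (f : FreeDialg k X) : Prop := ∀ u ∈ f.support, u.left = ([] : List X)

/-- `u` is the leading term (maximal term in the deg-lex order) of `f`. -/
def IsMaxTerm [LinearOrder X] (f : FreeDialg k X) (u : NDiword X) : Prop :=
  u ∈ f.support ∧ ∀ v ∈ f.support, v ≠ u → v.dlt u

/-- `f` is monic: its leading coefficient is `1`. -/
def Monic [LinearOrder X] (f : FreeDialg k X) : Prop :=
  ∃ u, IsMaxTerm f u ∧ f u = 1

/-- A context for an `s`-diword `[asb]`: a normal diword with one letter `x_k`
removed, where `s` is to be substituted.  `center a b` is the case `k = 0` (so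
`[asb] = a ⊢ ⋯ ⊢ s ⊣ ⋯ ⊣ b`); `left a w` is the case `k < 0` (so
`[asb] = a ⊢ ⋯ ⊢ s ⊢ [w]` with the center inside `w`); `right w b` is the case
`k > 0` (so `[asb] = [w] ⊣ s ⊣ ⋯ ⊣ b` with the center inside `w`). -/
inductive Ctx (X : Type*) where
  | center (a b : List X)
  | left (a : List X) (w : NDiword X)
  | right (w : NDiword X) (b : List X)

/-- The `s`-diword `[asb]` determined by a context: substitute `s` into the context. -/
noncomputable def Ctx.eval (s : FreeDialg k X) : Ctx X → FreeDialg k X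
  | Ctx.center a b => rfold (lfold a s) b
  | Ctx.left a w => lfold a (lmul s (Finsupp.single w 1))
  | Ctx.right w b => rfold (rmul (Finsupp.single w 1) s) b

/-- Substituting a normal diword `t` into a context gives a normal diword `[atb]`. -/
def Ctx.subst {X : Type*} (t : NDiword X) : Ctx X → NDiword X
  | Ctx.center a b => ⟨a ++ t.left, t.center, t.right ++ b⟩
  | Ctx.left a w => ⟨a ++ t.word ++ w.left, w.center, w.right⟩
  | Ctx.right w b => ⟨w.left, w.center, w.right ++ t.word ++ b⟩

/-- `[asb]` is a normal `s`-diword: either `s` sits at the center (`k = 0`), or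
`k < 0` and `s` is left normed, or `k > 0` and `s` is right normed. -/
def IsNormalFor (s : FreeDialg k X) : Ctx X → Prop
  | Ctx.center _ _ => True
  | Ctx.left _ _ => LeftNormed s
  | Ctx.right _ _ => RightNormed s

/-- Membership in the two-sided dialgebra ideal generated by `S`. -/
inductive IdealGen (S : Set (FreeDialg k X)) : FreeDialg k X → Prop
  | of {s : FreeDialg k X} : s ∈ S → IdealGen S s
  | zero : IdealGen S 0
  | add {f g : FreeDialg k X} : IdealGen S f → IdealGen S g → IdealGen S (f + g)
  | smul (r : k) {f : FreeDialg k X} : IdealGen S f → IdealGen S (r • f)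
  | lmul_left (g : FreeDialg k X) {f : FreeDialg k X} : IdealGen S f → IdealGen S (lmul g f)
  | lmul_right (g : FreeDialg k X) {f : FreeDialg k X} : IdealGen S f → IdealGen S (lmul f g)
  | rmul_left (g : FreeDialg k X) {f : FreeDialg k X} : IdealGen S f → IdealGen S (rmul g f)
  | rmul_right (g : FreeDialg k X) {f : FreeDialg k X} : IdealGen S f → IdealGen S (rmul f g)

/-- The two-sided dialgebra ideal `Id(S)` generated by `S`, as a submodule. -/
def dialgIdeal (S : Set (FreeDialg k X)) : Submodule k (FreeDialg k X) where
  carrier := {f | IdealGen S f}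
  add_mem' := fun hf hg => IdealGen.add hf hg
  zero_mem' := IdealGen.zero
  smul_mem' := fun r _ hf => IdealGen.smul r hf

end FreeDialgebra

section GSB

variable {k : Type*} [Field k] {X : Type*}

/-- `h` is a linear combination `Σᵢ αᵢ [aᵢsᵢbᵢ]` of `sᵢ`-diwords with `sᵢ ∈ S`, where
each pair `(sᵢ, [aᵢ⋅bᵢ])` satisfies the property `P`. -/
def IsCombination (S : Set (FreeDialg k X)) (h : FreeDialg k X)
    (P : FreeDialg k X → Ctx X → Prop) : Prop :=
  ∃ (n : ℕ) (α : Fin n → k) (s : Fin n → FreeDialg k X) (c : Fin n → Ctx X),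
    (∀ i, s i ∈ S) ∧ (∀ i, P (s i) (c i)) ∧
    h = ∑ i, α i • (c i).eval (s i)

/-- The composition of left multiplication `x ⊣ f` is trivial modulo `S`. -/
def TrivLMul [LinearOrder X] (S : Set (FreeDialg k X)) (x : X) (f : FreeDialg k X) : Prop :=
  IsCombination S (rmul (ofX k x) f) fun s c =>
    IsNormalFor s c ∧ RightNormed s ∧ RightNormed (c.eval s) ∧
      ∀ u m, IsMaxTerm s u → IsMaxTerm (rmul (ofX k x) f) m →
        (c.subst u).word.length ≤ m.word.length

/-- The composition of right multiplication `f ⊢ x` is trivial modulo `S`. -/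
def TrivRMul [LinearOrder X] (S : Set (FreeDialg k X)) (x : X) (f : FreeDialg k X) : Prop :=
  IsCombination S (lmul f (ofX k x)) fun s c =>
    IsNormalFor s c ∧ LeftNormed s ∧ LeftNormed (c.eval s) ∧
      ∀ u m, IsMaxTerm s u → IsMaxTerm (lmul f (ofX k x)) m →
        (c.subst u).word.length ≤ m.word.length

/-- All compositions of left multiplication in `S` are trivial modulo `S`. -/
def LMulCompsTrivial [LinearOrder X] (S : Set (FreeDialg k X)) : Prop :=
  ∀ f ∈ S, ¬ RightNormed f → ∀ x : X, TrivLMul S x f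

/-- All compositions of right multiplication in `S` are trivial modulo `S`. -/
def RMulCompsTrivial [LinearOrder X] (S : Set (FreeDialg k X)) : Prop :=
  ∀ f ∈ S, ¬ LeftNormed f → ∀ x : X, TrivRMul S x f

/-- `h` is trivial modulo `(S, [w])`: it is a combination of normal `S`-diwords with
leading normal diwords `< [w]`; moreover all the summands are right (resp. left)
normed `S`-diwords whenever the side condition `rn` (resp. `ln`) holds. -/
def TrivBelowWith [LinearOrder X] (S : Set (FreeDialg k X)) (h : FreeDialg k X)
    (w : NDiword X) (rn ln : Prop) : Prop :=
  IsCombination S h fun s c =>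
    IsNormalFor s c ∧ (∀ u, IsMaxTerm s u → (c.subst u).dlt w) ∧
      (rn → RightNormed s ∧ RightNormed (c.eval s)) ∧
      (ln → LeftNormed s ∧ LeftNormed (c.eval s))

/-- All compositions of inclusion among elements of `S` are trivial. -/
def InclCompsTrivial [LinearOrder X] (S : Set (FreeDialg k X)) : Prop :=
  ∀ f ∈ S, ∀ g ∈ S, ∀ (fb gb : NDiword X) (c : Ctx X),
    IsMaxTerm f fb → IsMaxTerm g gb → IsNormalFor g c → fb = c.subst gb →
      TrivBelowWith S (f - c.eval g) fb
        (RightNormed f ∧ RightNormed g ∧ RightNormed (c.eval g))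
        (LeftNormed f ∧ LeftNormed g ∧ LeftNormed (c.eval g))

/-- A context with no letters before the substituted polynomial (shape `[fb]`). -/
def Ctx.noLeft {X : Type*} : Ctx X → Prop
  | Ctx.center a _ => a = []
  | Ctx.left a _ => a = []
  | Ctx.right _ _ => False

/-- A context with no letters after the substituted polynomial (shape `[ag]`). -/
def Ctx.noRight {X : Type*} : Ctx X → Prop
  | Ctx.center _ b => b = []
  | Ctx.right _ b => b = []
  | Ctx.left _ _ => False

/-- All compositions of intersection among elements of `S` are trivial. -/
def IntersectCompsTrivial [LinearOrder X] (S : Set (FreeDialg k X)) : Prop :=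
  ∀ f ∈ S, ∀ g ∈ S, ∀ (fb gb : NDiword X) (cf cg : Ctx X),
    IsMaxTerm f fb → IsMaxTerm g gb → IsNormalFor f cf → IsNormalFor g cg →
    cf.noLeft → cg.noRight → cf.subst fb = cg.subst gb →
    (cf.subst fb).word.length < fb.word.length + gb.word.length →
      TrivBelowWith S (cf.eval f - cg.eval g) (cf.subst fb)
        (RightNormed f ∧ RightNormed g ∧ RightNormed (cf.eval f) ∧ RightNormed (cg.eval g))
        (LeftNormed f ∧ LeftNormed g ∧ LeftNormed (cf.eval f) ∧ LeftNormed (cg.eval g))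

/-- `S` is a Gröbner–Shirshov basis in the free dialgebra: `S` is monic and all
compositions (left multiplication, right multiplication, inclusion, intersection)
of elements of `S` are trivial. -/
def IsGSB [LinearOrder X] (S : Set (FreeDialg k X)) : Prop :=
  (∀ f ∈ S, Monic f) ∧ LMulCompsTrivial S ∧ RMulCompsTrivial S ∧
    InclCompsTrivial S ∧ IntersectCompsTrivial S

/-- `Irr(S)`: the normal diwords that are not of the form `[a[s̄]b]` for any `s ∈ S`
and normal `s`-diword `[asb]`. -/
def IrrSet [LinearOrder X] (S : Set (FreeDialg k X)) : Set (NDiword X) :=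
  {u | ¬ ∃ s ∈ S, ∃ (c : Ctx X) (sb : NDiword X),
    IsMaxTerm s sb ∧ IsNormalFor s c ∧ u = c.subst sb}

end GSB

section AuxGSB

variable {k : Type*} [Field k] {X : Type*}

/-! ### Monomial-level identities -/

@[simp] lemma NDiword.word_ne_nil (u : NDiword X) : u.word ≠ [] := by
  simp [NDiword.word]

lemma NDiword.lconc_assoc (u v w : NDiword X) :
    (u.lconc v).lconc w = u.lconc (v.lconc w) := by
  simp [NDiword.lconc, NDiword.word, List.append_assoc]

lemma NDiword.rconc_assoc (u v w : NDiword X) :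
    (u.rconc v).rconc w = u.rconc (v.rconc w) := by
  simp [NDiword.rconc, NDiword.word, List.append_assoc]

lemma NDiword.di1 (u v w : NDiword X) :
    u.rconc (v.lconc w) = (u.rconc v).rconc w := by
  simp [NDiword.rconc, NDiword.lconc, NDiword.word, List.append_assoc]

lemma NDiword.di2 (u v w : NDiword X) :
    (u.rconc v).lconc w = u.lconc (v.lconc w) := by
  simp [NDiword.rconc, NDiword.lconc, NDiword.word, List.append_assoc]

lemma NDiword.di3 (u v w : NDiword X) :
    u.lconc (v.rconc w) = (u.lconc v).rconc w := by
  simp [NDiword.rconc, NDiword.lconc, NDiword.word, List.append_assoc]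

/-! ### Bilinearity of the products -/

lemma lmul_eq_sum (f g : FreeDialg k X) :
    lmul f g = f.sum fun u a => a • Finsupp.mapDomain u.lconc g := by
  unfold lmul
  refine Finsupp.sum_congr fun u _ => ?_
  rw [Finsupp.mapDomain, Finsupp.smul_sum]
  exact Finsupp.sum_congr fun v _ => by rw [Finsupp.smul_single, smul_eq_mul]

lemma rmul_eq_sum (f g : FreeDialg k X) :
    rmul f g = f.sum fun u a => a • Finsupp.mapDomain u.rconc g := by
  unfold rmul
  refine Finsupp.sum_congr fun u _ => ?_
  rw [Finsupp.mapDomain, Finsupp.smul_sum]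
  exact Finsupp.sum_congr fun v _ => by rw [Finsupp.smul_single, smul_eq_mul]

@[simp] lemma lmul_zero (f : FreeDialg k X) : lmul f 0 = 0 := by
  rw [lmul_eq_sum]; simp

@[simp] lemma zero_lmul (g : FreeDialg k X) : lmul 0 g = 0 := by
  rw [lmul_eq_sum]; simp

@[simp] lemma rmul_zero (f : FreeDialg k X) : rmul f 0 = 0 := by
  rw [rmul_eq_sum]; simp

@[simp] lemma zero_rmul (g : FreeDialg k X) : rmul 0 g = 0 := by
  rw [rmul_eq_sum]; simp

lemma lmul_add (f g h : FreeDialg k X) : lmul f (g + h) = lmul f g + lmul f h := by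
  simp only [lmul_eq_sum, Finsupp.mapDomain_add, smul_add]
  exact Finsupp.sum_add

lemma add_lmul (f g h : FreeDialg k X) : lmul (f + g) h = lmul f h + lmul g h := by
  simp only [lmul_eq_sum]
  exact Finsupp.sum_add_index' (fun _ => by simp) (fun _ a b => by rw [add_smul])

lemma rmul_add (f g h : FreeDialg k X) : rmul f (g + h) = rmul f g + rmul f h := by
  simp only [rmul_eq_sum, Finsupp.mapDomain_add, smul_add]
  exact Finsupp.sum_add

lemma add_rmul (f g h : FreeDialg k X) : rmul (f + g) h = rmul f h + rmul g h := by
  simp only [rmul_eq_sum]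
  exact Finsupp.sum_add_index' (fun _ => by simp) (fun _ a b => by rw [add_smul])

lemma lmul_smul (r : k) (f g : FreeDialg k X) : lmul f (r • g) = r • lmul f g := by
  rw [lmul_eq_sum, lmul_eq_sum, Finsupp.smul_sum]
  exact Finsupp.sum_congr fun u _ => by rw [Finsupp.mapDomain_smul, smul_comm]

lemma smul_lmul (r : k) (f g : FreeDialg k X) : lmul (r • f) g = r • lmul f g := by
  rw [lmul_eq_sum, lmul_eq_sum, Finsupp.smul_sum,
    Finsupp.sum_smul_index' (fun _ => by simp)]
  exact Finsupp.sum_congr fun u _ => by rw [smul_eq_mul, mul_smul]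

lemma rmul_smul (r : k) (f g : FreeDialg k X) : rmul f (r • g) = r • rmul f g := by
  rw [rmul_eq_sum, rmul_eq_sum, Finsupp.smul_sum]
  exact Finsupp.sum_congr fun u _ => by rw [Finsupp.mapDomain_smul, smul_comm]

lemma smul_rmul (r : k) (f g : FreeDialg k X) : rmul (r • f) g = r • rmul f g := by
  rw [rmul_eq_sum, rmul_eq_sum, Finsupp.smul_sum,
    Finsupp.sum_smul_index' (fun _ => by simp)]
  exact Finsupp.sum_congr fun u _ => by rw [smul_eq_mul, mul_smul]

lemma lmul_single_single (u v : NDiword X) (a b : k) :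
    lmul (Finsupp.single u a) (Finsupp.single v b) = Finsupp.single (u.lconc v) (a * b) := by
  rw [lmul_eq_sum, Finsupp.sum_single_index (by simp), Finsupp.mapDomain_single,
    Finsupp.smul_single, smul_eq_mul]

lemma rmul_single_single (u v : NDiword X) (a b : k) :
    rmul (Finsupp.single u a) (Finsupp.single v b) = Finsupp.single (u.rconc v) (a * b) := by
  rw [rmul_eq_sum, Finsupp.sum_single_index (by simp), Finsupp.mapDomain_single,
    Finsupp.smul_single, smul_eq_mul]

/-! ### The five dialgebra identities in the free dialgebra -/

lemma lmul_assoc (f g h : FreeDialg k X) : lmul (lmul f g) h = lmul f (lmul g h) := by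
  induction f using Finsupp.induction_linear with
  | zero => simp
  | add f1 f2 ih1 ih2 => simp [add_lmul, ih1, ih2]
  | single u a =>
    induction g using Finsupp.induction_linear with
    | zero => simp
    | add g1 g2 ih1 ih2 => simp [add_lmul, lmul_add, ih1, ih2]
    | single v b =>
      induction h using Finsupp.induction_linear with
      | zero => simp
      | add h1 h2 ih1 ih2 => simp [lmul_add, ih1, ih2]
      | single w c => simp only [lmul_single_single, NDiword.lconc_assoc, mul_assoc]

lemma rmul_assoc (f g h : FreeDialg k X) : rmul (rmul f g) h = rmul f (rmul g h) := by
  induction f using Finsupp.induction_linear with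
  | zero => simp
  | add f1 f2 ih1 ih2 => simp [add_rmul, ih1, ih2]
  | single u a =>
    induction g using Finsupp.induction_linear with
    | zero => simp
    | add g1 g2 ih1 ih2 => simp [add_rmul, rmul_add, ih1, ih2]
    | single v b =>
      induction h using Finsupp.induction_linear with
      | zero => simp
      | add h1 h2 ih1 ih2 => simp [rmul_add, ih1, ih2]
      | single w c => simp only [rmul_single_single, NDiword.rconc_assoc, mul_assoc]

lemma di1_mul (f g h : FreeDialg k X) : rmul f (lmul g h) = rmul (rmul f g) h := by
  induction f using Finsupp.induction_linear with
  | zero => simp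
  | add f1 f2 ih1 ih2 => simp [add_rmul, ih1, ih2]
  | single u a =>
    induction g using Finsupp.induction_linear with
    | zero => simp
    | add g1 g2 ih1 ih2 => simp [add_lmul, add_rmul, rmul_add, ih1, ih2]
    | single v b =>
      induction h using Finsupp.induction_linear with
      | zero => simp
      | add h1 h2 ih1 ih2 => simp [lmul_add, rmul_add, ih1, ih2]
      | single w c =>
        simp only [lmul_single_single, rmul_single_single, NDiword.di1, mul_assoc]

lemma di2_mul (f g h : FreeDialg k X) : lmul (rmul f g) h = lmul f (lmul g h) := by
  induction f using Finsupp.induction_linear with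
  | zero => simp
  | add f1 f2 ih1 ih2 => simp [add_rmul, add_lmul, ih1, ih2]
  | single u a =>
    induction g using Finsupp.induction_linear with
    | zero => simp
    | add g1 g2 ih1 ih2 => simp [add_lmul, rmul_add, lmul_add, ih1, ih2]
    | single v b =>
      induction h using Finsupp.induction_linear with
      | zero => simp
      | add h1 h2 ih1 ih2 => simp [lmul_add, ih1, ih2]
      | single w c =>
        simp only [lmul_single_single, rmul_single_single, NDiword.di2, mul_assoc]

lemma di3_mul (f g h : FreeDialg k X) : lmul f (rmul g h) = rmul (lmul f g) h := by
  induction f using Finsupp.induction_linear with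
  | zero => simp
  | add f1 f2 ih1 ih2 => simp [add_lmul, add_rmul, ih1, ih2]
  | single u a =>
    induction g using Finsupp.induction_linear with
    | zero => simp
    | add g1 g2 ih1 ih2 => simp [add_rmul, lmul_add, add_lmul, rmul_add, ih1, ih2]
    | single v b =>
      induction h using Finsupp.induction_linear with
      | zero => simp
      | add h1 h2 ih1 ih2 => simp [lmul_add, rmul_add, ih1, ih2]
      | single w c =>
        simp only [lmul_single_single, rmul_single_single, NDiword.di3, mul_assoc]

/-! ### Folds -/

@[simp] lemma lfold_nil (t : FreeDialg k X) : lfold [] t = t := rfl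

lemma lfold_cons (x : X) (a : List X) (t : FreeDialg k X) :
    lfold (x :: a) t = lmul (ofX k x) (lfold a t) := rfl

@[simp] lemma rfold_nil (t : FreeDialg k X) : rfold t [] = t := rfl

lemma rfold_cons (x : X) (b : List X) (t : FreeDialg k X) :
    rfold t (x :: b) = rfold (rmul t (ofX k x)) b := rfl

@[simp] lemma lfold_zero (a : List X) : lfold a (0 : FreeDialg k X) = 0 := by
  induction a with
  | nil => rfl
  | cons x a ih => rw [lfold_cons, ih, lmul_zero]

@[simp] lemma rfold_zero (b : List X) : rfold (0 : FreeDialg k X) b = 0 := by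
  induction b with
  | nil => rfl
  | cons y b ih => rw [rfold_cons, zero_rmul, ih]

lemma lfold_add (a : List X) (f g : FreeDialg k X) :
    lfold a (f + g) = lfold a f + lfold a g := by
  induction a with
  | nil => rfl
  | cons x a ih => rw [lfold_cons, ih, lmul_add, lfold_cons, lfold_cons]

lemma rfold_add (b : List X) (f g : FreeDialg k X) :
    rfold (f + g) b = rfold f b + rfold g b := by
  induction b generalizing f g with
  | nil => rfl
  | cons y b ih => rw [rfold_cons, add_rmul, ih, rfold_cons, rfold_cons]

lemma lfold_smul (a : List X) (r : k) (f : FreeDialg k X) :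
    lfold a (r • f) = r • lfold a f := by
  induction a with
  | nil => rfl
  | cons x a ih => rw [lfold_cons, ih, lmul_smul, lfold_cons]

lemma rfold_smul (b : List X) (r : k) (f : FreeDialg k X) :
    rfold (r • f) b = r • rfold f b := by
  induction b generalizing f with
  | nil => rfl
  | cons y b ih => rw [rfold_cons, smul_rmul, ih, rfold_cons]

lemma lfold_append (a a' : List X) (t : FreeDialg k X) :
    lfold (a ++ a') t = lfold a (lfold a' t) := by
  simp [lfold, List.foldr_append]

lemma rfold_append (t : FreeDialg k X) (b b' : List X) :
    rfold t (b ++ b') = rfold (rfold t b) b' := by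
  simp [rfold, List.foldl_append]

lemma lfold_lmul (a : List X) (f g : FreeDialg k X) :
    lfold a (lmul f g) = lmul (lfold a f) g := by
  induction a with
  | nil => rfl
  | cons x a ih => rw [lfold_cons, ih, ← lmul_assoc, lfold_cons]

lemma lfold_rmul (a : List X) (f g : FreeDialg k X) :
    lfold a (rmul f g) = rmul (lfold a f) g := by
  induction a with
  | nil => rfl
  | cons x a ih => rw [lfold_cons, ih, di3_mul, lfold_cons]

lemma rfold_rmul (f g : FreeDialg k X) (b : List X) :
    rfold (rmul f g) b = rmul f (rfold g b) := by
  induction b generalizing g with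
  | nil => rfl
  | cons y b ih => rw [rfold_cons, rmul_assoc, ih, rfold_cons]

lemma rfold_lmul (f g : FreeDialg k X) (b : List X) :
    rfold (lmul f g) b = lmul f (rfold g b) := by
  induction b generalizing g with
  | nil => rfl
  | cons y b ih => rw [rfold_cons, ← di3_mul, ih, rfold_cons]

lemma lfold_rfold (a : List X) (f : FreeDialg k X) (b : List X) :
    lfold a (rfold f b) = rfold (lfold a f) b := by
  induction a with
  | nil => rfl
  | cons x a ih => rw [lfold_cons, ih, ← rfold_lmul, lfold_cons]

lemma lmul_rfold (f : FreeDialg k X) (b : List X) (h : FreeDialg k X) :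
    lmul (rfold f b) h = lmul f (lfold b h) := by
  induction b generalizing f with
  | nil => rfl
  | cons y b ih => rw [rfold_cons, ih, di2_mul, lfold_cons]

lemma rmul_lfold (f : FreeDialg k X) (a : List X) (g : FreeDialg k X) :
    rmul f (lfold a g) = rmul (rfold f a) g := by
  induction a generalizing f with
  | nil => rfl
  | cons x a ih => rw [lfold_cons, di1_mul, ih, rfold_cons]

lemma lfold_single (a : List X) (v : NDiword X) (c : k) :
    lfold a (Finsupp.single v c) = Finsupp.single ⟨a ++ v.left, v.center, v.right⟩ c := by
  induction a with
  | nil => rfl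
  | cons x a ih =>
    rw [lfold_cons, ih, show ofX k x = Finsupp.single ⟨[], x, []⟩ 1 from rfl,
      lmul_single_single, one_mul]
    simp [NDiword.lconc, NDiword.word]

lemma rfold_single (v : NDiword X) (c : k) (b : List X) :
    rfold (Finsupp.single v c) b = Finsupp.single ⟨v.left, v.center, v.right ++ b⟩ c := by
  induction b generalizing v with
  | nil => simp
  | cons y b ih =>
    rw [rfold_cons, show ofX k y = Finsupp.single ⟨[], y, []⟩ 1 from rfl,
      rmul_single_single, mul_one, ih]
    simp [NDiword.rconc, NDiword.word]

/-! ### mapDomain descriptions -/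

lemma lmul_single_one_left (w : NDiword X) (f : FreeDialg k X) :
    lmul (Finsupp.single w 1) f = Finsupp.mapDomain w.lconc f := by
  rw [lmul_eq_sum, Finsupp.sum_single_index (by simp), one_smul]

lemma rmul_single_one_left (w : NDiword X) (f : FreeDialg k X) :
    rmul (Finsupp.single w 1) f = Finsupp.mapDomain w.rconc f := by
  rw [rmul_eq_sum, Finsupp.sum_single_index (by simp), one_smul]

lemma lmul_single_one_right (f : FreeDialg k X) (w : NDiword X) :
    lmul f (Finsupp.single w 1) = Finsupp.mapDomain (fun u => u.lconc w) f := by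
  rw [lmul_eq_sum, Finsupp.mapDomain]
  exact Finsupp.sum_congr fun u _ => by
    rw [Finsupp.mapDomain_single, Finsupp.smul_single, smul_eq_mul, mul_one]

lemma rmul_single_one_right (f : FreeDialg k X) (w : NDiword X) :
    rmul f (Finsupp.single w 1) = Finsupp.mapDomain (fun u => u.rconc w) f := by
  rw [rmul_eq_sum, Finsupp.mapDomain]
  exact Finsupp.sum_congr fun u _ => by
    rw [Finsupp.mapDomain_single, Finsupp.smul_single, smul_eq_mul, mul_one]

lemma lfold_eq_mapDomain (a : List X) (f : FreeDialg k X) :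
    lfold a f =
      Finsupp.mapDomain (fun u : NDiword X => ⟨a ++ u.left, u.center, u.right⟩) f := by
  induction a with
  | nil =>
    rw [lfold_nil, show (fun u : NDiword X => (⟨[] ++ u.left, u.center, u.right⟩ : NDiword X))
      = id from funext fun u => by simp, Finsupp.mapDomain_id]
  | cons x a ih =>
    rw [lfold_cons, ih, show ofX k x = Finsupp.single ⟨[], x, []⟩ 1 from rfl,
      lmul_single_one_left, ← Finsupp.mapDomain_comp]
    exact congrArg (fun E => Finsupp.mapDomain E f) (funext fun u => rfl)

lemma rfold_eq_mapDomain (f : FreeDialg k X) (b : List X) :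
    rfold f b =
      Finsupp.mapDomain (fun u : NDiword X => ⟨u.left, u.center, u.right ++ b⟩) f := by
  induction b generalizing f with
  | nil =>
    rw [rfold_nil, show (fun u : NDiword X => (⟨u.left, u.center, u.right ++ []⟩ : NDiword X))
      = id from funext fun u => by simp, Finsupp.mapDomain_id]
  | cons y b ih =>
    rw [rfold_cons, ih, show ofX k y = Finsupp.single ⟨[], y, []⟩ 1 from rfl,
      rmul_single_one_right, ← Finsupp.mapDomain_comp]
    congr 1
    funext u
    simp [Function.comp, NDiword.rconc, NDiword.word, List.append_assoc]

/-! ### Vanishing of wrongly-normed evaluations -/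

lemma mapDomain_eq_zero_of_leftNormed {E : NDiword X → NDiword X}
    (hE : ∀ u, (E u).right ≠ []) {t : FreeDialg k X}
    (h : LeftNormed (Finsupp.mapDomain E t)) : Finsupp.mapDomain E t = 0 := by
  rw [← Finsupp.support_eq_empty, Finset.eq_empty_iff_forall_notMem]
  intro v hv
  by_cases hrange : v ∈ Set.range E
  · obtain ⟨u, rfl⟩ := hrange
    exact hE u (h _ hv)
  · exact Finsupp.mem_support_iff.mp hv (Finsupp.mapDomain_notin_range _ _ hrange)

lemma mapDomain_eq_zero_of_rightNormed {E : NDiword X → NDiword X}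
    (hE : ∀ u, (E u).left ≠ []) {t : FreeDialg k X}
    (h : RightNormed (Finsupp.mapDomain E t)) : Finsupp.mapDomain E t = 0 := by
  rw [← Finsupp.support_eq_empty, Finset.eq_empty_iff_forall_notMem]
  intro v hv
  by_cases hrange : v ∈ Set.range E
  · obtain ⟨u, rfl⟩ := hrange
    exact hE u (h _ hv)
  · exact Finsupp.mem_support_iff.mp hv (Finsupp.mapDomain_notin_range _ _ hrange)

lemma eval_right_eq_zero_of_leftNormed (w'' : NDiword X) (b'' : List X) (t : FreeDialg k X)
    (h : LeftNormed (Ctx.eval t (Ctx.right w'' b''))) : Ctx.eval t (Ctx.right w'' b'') = 0 := by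
  have hrepr : Ctx.eval t (Ctx.right w'' b'') = Finsupp.mapDomain
      (fun u : NDiword X => ⟨w''.left, w''.center, (w''.right ++ u.word) ++ b''⟩) t := by
    show rfold (rmul (Finsupp.single w'' 1) t) b'' = _
    rw [rmul_single_one_left, rfold_eq_mapDomain, ← Finsupp.mapDomain_comp]
    rfl
  rw [hrepr] at h ⊢
  exact mapDomain_eq_zero_of_leftNormed (fun u => by simp [NDiword.word]) h

lemma eval_left_eq_zero_of_rightNormed (a'' : List X) (w'' : NDiword X) (t : FreeDialg k X)
    (h : RightNormed (Ctx.eval t (Ctx.left a'' w''))) : Ctx.eval t (Ctx.left a'' w'') = 0 := by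
  have hrepr : Ctx.eval t (Ctx.left a'' w'') = Finsupp.mapDomain
      (fun u : NDiword X => ⟨a'' ++ (u.word ++ w''.left), w''.center, w''.right⟩) t := by
    show lfold a'' (lmul t (Finsupp.single w'' 1)) = _
    rw [lmul_single_one_right, lfold_eq_mapDomain, ← Finsupp.mapDomain_comp]
    rfl
  rw [hrepr] at h ⊢
  exact mapDomain_eq_zero_of_rightNormed (fun u => by simp [NDiword.word]) h

/-! ### Transfer of combinations along linear maps -/

lemma IsCombination.transfer {S : Set (FreeDialg k X)} {h : FreeDialg k X}
    {P Q : FreeDialg k X → Ctx X → Prop} (Φ : FreeDialg k X → FreeDialg k X)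
    (hadd : ∀ f g, Φ (f + g) = Φ f + Φ g) (hsmul : ∀ (r : k) f, Φ (r • f) = r • Φ f)
    (hQ0 : ∀ t, Q t (Ctx.center [] []))
    (hPQ : ∀ t c, t ∈ S → P t c →
      Φ (Ctx.eval t c) = 0 ∨ ∃ c', Q t c' ∧ Φ (Ctx.eval t c) = Ctx.eval t c')
    (hc : IsCombination S h P) : IsCombination S (Φ h) Q := by
  classical
  obtain ⟨n, α, s, c, hS, hP, rfl⟩ := hc
  have hchoice : ∀ i : Fin n, ∃ (β : k) (c' : Ctx X), Q (s i) c' ∧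
      Φ (α i • Ctx.eval (s i) (c i)) = β • Ctx.eval (s i) c' := by
    intro i
    rcases hPQ (s i) (c i) (hS i) (hP i) with h0 | ⟨c', hQ, he⟩
    · exact ⟨0, Ctx.center [] [], hQ0 _, by rw [hsmul, h0, smul_zero, zero_smul]⟩
    · exact ⟨α i, c', hQ, by rw [hsmul, he]⟩
  choose β c' hQ' heq' using hchoice
  refine ⟨n, β, s, c', hS, hQ', ?_⟩
  calc Φ (∑ i, α i • Ctx.eval (s i) (c i)) = ∑ i, Φ (α i • Ctx.eval (s i) (c i)) :=
        map_sum (AddMonoidHom.mk' Φ hadd) _ _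
    _ = ∑ i, β i • Ctx.eval (s i) (c' i) := Finset.sum_congr rfl fun i _ => heq' i

/-! ### The four shape lemmas -/

lemma shape_left_lmul {t : FreeDialg k X} (a : List X) (W : NDiword X) (c' : Ctx X)
    (hlt : LeftNormed t) (hle : LeftNormed (Ctx.eval t c')) :
    lfold a (lmul (Ctx.eval t c') (Finsupp.single W 1)) = 0 ∨
      ∃ c'', IsNormalFor t c'' ∧
        lfold a (lmul (Ctx.eval t c') (Finsupp.single W 1)) = Ctx.eval t c'' := by
  cases c' with
  | center a'' b'' =>
    right
    refine ⟨Ctx.left (a ++ a'') ⟨b'' ++ W.left, W.center, W.right⟩, hlt, ?_⟩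
    show lfold a (lmul (rfold (lfold a'' t) b'') (Finsupp.single W 1))
      = lfold (a ++ a'') (lmul t (Finsupp.single ⟨b'' ++ W.left, W.center, W.right⟩ 1))
    rw [lmul_rfold, lfold_single, ← lfold_lmul, ← lfold_append]
  | left a'' w'' =>
    right
    refine ⟨Ctx.left (a ++ a'') (w''.lconc W), hlt, ?_⟩
    show lfold a (lmul (lfold a'' (lmul t (Finsupp.single w'' 1))) (Finsupp.single W 1))
      = lfold (a ++ a'') (lmul t (Finsupp.single (w''.lconc W) 1))
    rw [← lfold_lmul, ← lfold_append, lmul_assoc, lmul_single_single, one_mul]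
  | right w'' b'' =>
    left
    rw [eval_right_eq_zero_of_leftNormed _ _ _ hle, zero_lmul, lfold_zero]

lemma shape_left_rfold {t : FreeDialg k X} (a : List X) (r : List X) (c' : Ctx X)
    (hlt : LeftNormed t) (hle : LeftNormed (Ctx.eval t c')) :
    lfold a (rfold (Ctx.eval t c') r) = 0 ∨
      ∃ c'', IsNormalFor t c'' ∧ lfold a (rfold (Ctx.eval t c') r) = Ctx.eval t c'' := by
  cases c' with
  | center a'' b'' =>
    right
    refine ⟨Ctx.center (a ++ a'') (b'' ++ r), trivial, ?_⟩
    show lfold a (rfold (rfold (lfold a'' t) b'') r) = rfold (lfold (a ++ a'') t) (b'' ++ r)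
    rw [← rfold_append, lfold_rfold, ← lfold_append]
  | left a'' w'' =>
    right
    refine ⟨Ctx.left (a ++ a'') ⟨w''.left, w''.center, w''.right ++ r⟩, hlt, ?_⟩
    show lfold a (rfold (lfold a'' (lmul t (Finsupp.single w'' 1))) r)
      = lfold (a ++ a'') (lmul t (Finsupp.single ⟨w''.left, w''.center, w''.right ++ r⟩ 1))
    rw [← lfold_rfold, ← lfold_append, rfold_lmul, rfold_single]
  | right w'' b'' =>
    left
    rw [eval_right_eq_zero_of_leftNormed _ _ _ hle, rfold_zero, lfold_zero]

lemma shape_right_rmul {t : FreeDialg k X} (w' : NDiword X) (b : List X) (c' : Ctx X)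
    (hrt : RightNormed t) (hre : RightNormed (Ctx.eval t c')) :
    rfold (rmul (Finsupp.single w' 1) (Ctx.eval t c')) b = 0 ∨
      ∃ c'', IsNormalFor t c'' ∧
        rfold (rmul (Finsupp.single w' 1) (Ctx.eval t c')) b = Ctx.eval t c'' := by
  cases c' with
  | center a'' b'' =>
    right
    refine ⟨Ctx.right ⟨w'.left, w'.center, w'.right ++ a''⟩ (b'' ++ b), hrt, ?_⟩
    show rfold (rmul (Finsupp.single w' 1) (rfold (lfold a'' t) b'')) b
      = rfold (rmul (Finsupp.single ⟨w'.left, w'.center, w'.right ++ a''⟩ 1) t) (b'' ++ b)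
    rw [← rfold_rmul, ← rfold_append, rmul_lfold, rfold_single]
  | left a'' w'' =>
    left
    rw [eval_left_eq_zero_of_rightNormed _ _ _ hre, rmul_zero, rfold_zero]
  | right w'' b'' =>
    right
    refine ⟨Ctx.right (w'.rconc w'') (b'' ++ b), hrt, ?_⟩
    show rfold (rmul (Finsupp.single w' 1) (rfold (rmul (Finsupp.single w'' 1) t) b'')) b
      = rfold (rmul (Finsupp.single (w'.rconc w'') 1) t) (b'' ++ b)
    rw [← rfold_rmul, ← rfold_append, ← rmul_assoc, rmul_single_single, one_mul]

lemma shape_right_lfold {t : FreeDialg k X} (l : List X) (b : List X) (c' : Ctx X)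
    (hrt : RightNormed t) (hre : RightNormed (Ctx.eval t c')) :
    rfold (lfold l (Ctx.eval t c')) b = 0 ∨
      ∃ c'', IsNormalFor t c'' ∧ rfold (lfold l (Ctx.eval t c')) b = Ctx.eval t c'' := by
  cases c' with
  | center a'' b'' =>
    right
    refine ⟨Ctx.center (l ++ a'') (b'' ++ b), trivial, ?_⟩
    show rfold (lfold l (rfold (lfold a'' t) b'')) b = rfold (lfold (l ++ a'') t) (b'' ++ b)
    rw [lfold_rfold, ← rfold_append, ← lfold_append]
  | left a'' w'' =>
    left
    rw [eval_left_eq_zero_of_rightNormed _ _ _ hre, lfold_zero, rfold_zero]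
  | right w'' b'' =>
    right
    refine ⟨Ctx.right ⟨l ++ w''.left, w''.center, w''.right⟩ (b'' ++ b), hrt, ?_⟩
    show rfold (lfold l (rfold (rmul (Finsupp.single w'' 1) t) b'')) b
      = rfold (rmul (Finsupp.single ⟨l ++ w''.left, w''.center, w''.right⟩ 1) t) (b'' ++ b)
    rw [lfold_rfold, ← rfold_append, lfold_rmul, lfold_single]

end AuxGSB

/-- Lemma on multiplication compositions: if every composition of
left and right multiplication of elements of the monic set `S` is trivial modulo
`S`, then every `s`-diword `[asb]` with `s ∈ S` is a linear combination of normal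
`S`-diwords. -/
theorem s_diword_eq_combination_of_normal {k X : Type*} [Field k] [LinearOrder X]
    [WellFoundedLT X] (S : Set (FreeDialg k X)) (hmonic : ∀ f ∈ S, Monic f)
    (hl : LMulCompsTrivial S) (hr : RMulCompsTrivial S)
    (s : FreeDialg k X) (hs : s ∈ S) (c : Ctx X) :
    IsCombination S (c.eval s) fun t c' => IsNormalFor t c' := by
  cases c with
  | center a b =>
    exact ⟨1, fun _ => 1, fun _ => s, fun _ => Ctx.center a b, fun _ => hs,
      fun _ => trivial, by simp⟩
  | left a w =>
    obtain ⟨wl, wc, wr⟩ := w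
    by_cases hL : LeftNormed s
    · exact ⟨1, fun _ => 1, fun _ => s, fun _ => Ctx.left a ⟨wl, wc, wr⟩, fun _ => hs,
        fun _ => hL, by simp⟩
    · cases wl with
      | nil =>
        have htriv := hr s hs hL wc
        have key : Ctx.eval s (Ctx.left a ⟨[], wc, wr⟩)
            = lfold a (rfold (lmul s (ofX k wc)) wr) := by
          show lfold a (lmul s (Finsupp.single ⟨[], wc, wr⟩ 1)) = _
          rw [rfold_lmul]
          have hdec : rfold (ofX k wc) wr
              = Finsupp.single (⟨[], wc, wr⟩ : NDiword X) (1 : k) := by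
            rw [show ofX k wc = Finsupp.single (⟨[], wc, []⟩ : NDiword X) (1 : k) from rfl,
              rfold_single]
            rfl
          rw [hdec]
        rw [key]
        exact IsCombination.transfer (fun g => lfold a (rfold g wr))
          (fun f g => by simp only [rfold_add, lfold_add])
          (fun r f => by simp only [rfold_smul, lfold_smul])
          (fun t => trivial)
          (fun t c' ht hp => shape_left_rfold a wr c' hp.2.1 hp.2.2.1)
          htriv
      | cons x l' =>
        have htriv := hr s hs hL x
        have key : Ctx.eval s (Ctx.left a ⟨x :: l', wc, wr⟩)
            = lfold a (lmul (lmul s (ofX k x)) (Finsupp.single ⟨l', wc, wr⟩ 1)) := by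
          show lfold a (lmul s (Finsupp.single ⟨x :: l', wc, wr⟩ 1)) = _
          rw [lmul_assoc]
          have hdec : lmul (ofX k x) (Finsupp.single (⟨l', wc, wr⟩ : NDiword X) (1 : k))
              = Finsupp.single (⟨x :: l', wc, wr⟩ : NDiword X) (1 : k) := by
            rw [show ofX k x = Finsupp.single (⟨[], x, []⟩ : NDiword X) (1 : k) from rfl,
              lmul_single_single, one_mul]
            rfl
          rw [hdec]
        rw [key]
        exact IsCombination.transfer
          (fun g => lfold a (lmul g (Finsupp.single ⟨l', wc, wr⟩ 1)))
          (fun f g => by simp only [add_lmul, lfold_add])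
          (fun r f => by simp only [smul_lmul, lfold_smul])
          (fun t => trivial)
          (fun t c' ht hp => shape_left_lmul a _ c' hp.2.1 hp.2.2.1)
          htriv
  | right w b =>
    obtain ⟨wl, wc, wr⟩ := w
    by_cases hR : RightNormed s
    · exact ⟨1, fun _ => 1, fun _ => s, fun _ => Ctx.right ⟨wl, wc, wr⟩ b, fun _ => hs,
        fun _ => hR, by simp⟩
    · rcases List.eq_nil_or_concat wr with hwr | ⟨r', y, hwr⟩ <;> subst hwr
      · have htriv := hl s hs hR wc
        have key : Ctx.eval s (Ctx.right ⟨wl, wc, []⟩ b)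
            = rfold (lfold wl (rmul (ofX k wc) s)) b := by
          show rfold (rmul (Finsupp.single ⟨wl, wc, []⟩ 1) s) b = _
          rw [lfold_rmul]
          have hdec : lfold wl (ofX k wc)
              = Finsupp.single (⟨wl, wc, []⟩ : NDiword X) (1 : k) := by
            rw [show ofX k wc = Finsupp.single (⟨[], wc, []⟩ : NDiword X) (1 : k) from rfl,
              lfold_single]
            simp
          rw [hdec]
        rw [key]
        exact IsCombination.transfer (fun g => rfold (lfold wl g) b)
          (fun f g => by simp only [lfold_add, rfold_add])
          (fun r f => by simp only [lfold_smul, rfold_smul])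
          (fun t => trivial)
          (fun t c' ht hp => shape_right_lfold wl b c' hp.2.1 hp.2.2.1)
          htriv
      · simp only [List.concat_eq_append]
        have htriv := hl s hs hR y
        have key : Ctx.eval s (Ctx.right ⟨wl, wc, r' ++ [y]⟩ b)
            = rfold (rmul (Finsupp.single ⟨wl, wc, r'⟩ 1) (rmul (ofX k y) s)) b := by
          show rfold (rmul (Finsupp.single ⟨wl, wc, r' ++ [y]⟩ 1) s) b = _
          rw [← rmul_assoc]
          have hdec : rmul (Finsupp.single (⟨wl, wc, r'⟩ : NDiword X) (1 : k)) (ofX k y)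
              = Finsupp.single (⟨wl, wc, r' ++ [y]⟩ : NDiword X) (1 : k) := by
            rw [show ofX k y = Finsupp.single (⟨[], y, []⟩ : NDiword X) (1 : k) from rfl,
              rmul_single_single, one_mul]
            rfl
          rw [hdec]
        rw [key]
        exact IsCombination.transfer
          (fun g => rfold (rmul (Finsupp.single ⟨wl, wc, r'⟩ 1) g) b)
          (fun f g => by simp only [rmul_add, rfold_add])
          (fun r f => by simp only [rmul_smul, rfold_smul])
          (fun t => trivial)
          (fun t c' ht hp => shape_right_rmul _ b c' hp.2.1 hp.2.2.1)
          htriv
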